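/- Let H be the R-module of R-valued functions on Y^{++} with almost finite support, with multiplication determined by c_λ * c_μ = Σ_ν m_{λ,μ}(ν) c_ν where each m_{λ,μ}(ν) ∈ ℤ_{≥0} is finite, m_{λ,μ}(ν) ≠ 0 implies ν ≤_{Q^∨} λ + μ, and m_{λ,0}(ν) = m_{0,λ}(ν) = δ_{λν}. Then this multiplication extends to all of H (all sums involved are finite), H is closed under it, and c_0 is a two-sided unit. -/

import Mathlib

open scoped Classical

lemma aux_sol_finite {V : Type*} [AddCommGroup V] [Module ℝ V]
    {Y : Type*} [AddCommGroup Y] (ι : Y →+ V)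
    {I : Type*} [Fintype I] (cr : I → Y)
    (hfree : ∀ a : I → ℝ, (∀ i, 0 ≤ a i) → ∑ i, a i • ι (cr i) = 0 → ∀ i, a i = 0)
    (w : V) : {N : I → ℕ | ∑ i, N i • ι (cr i) = w}.Finite := by
  set S := {N : I → ℕ | ∑ i, N i • ι (cr i) = w} with hS
  have hanti : IsAntichain (· ≤ ·) S := by
    intro N hN N' hN' hne hle
    apply hne
    have key : ∀ i, ((N' i : ℝ) - N i) = 0 := by
      apply hfree _ (fun i => by have := hle i; simp only [sub_nonneg]; exact_mod_cast this)
      have h1 : ∑ i, ((N' i : ℝ) - (N i : ℝ)) • ι (cr i)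
          = ∑ i, (N' i) • ι (cr i) - ∑ i, (N i) • ι (cr i) := by
        rw [← Finset.sum_sub_distrib]
        refine Finset.sum_congr rfl fun i _ => ?_
        rw [sub_smul, Nat.cast_smul_eq_nsmul, Nat.cast_smul_eq_nsmul]
      rw [h1, hN.out, hN'.out, sub_self]
    funext i
    have h2 := key i
    have : (N i : ℝ) = N' i := by linarith
    exact_mod_cast this
  exact hanti.finite_of_partiallyWellOrderedOn
    (Set.isPWO_of_wellQuasiOrderedLE S)

/-- key lemma: for fixed c, {y | y ∈ Qp ∧ c - y ∈ Qp} is finite. -/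
lemma aux_interval_finite {V : Type*} [AddCommGroup V] [Module ℝ V]
    {Y : Type*} [AddCommGroup Y] (ι : Y →+ V)
    {I : Type*} [Fintype I] (cr : I → Y)
    (hfree : ∀ a : I → ℝ, (∀ i, 0 ≤ a i) → ∑ i, a i • ι (cr i) = 0 → ∀ i, a i = 0)
    (c : Y) :
    {y : Y | (∃ n : I → ℕ, y = ∑ i, n i • cr i) ∧
      (∃ n : I → ℕ, c - y = ∑ i, n i • cr i)}.Finite := by
  have hsol := aux_sol_finite ι cr hfree (ι c)
  set S := {N : I → ℕ | ∑ i, N i • ι (cr i) = ι c}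
  -- the set of n bounded by some element of S is finite
  have hbdd : {n : I → ℕ | ∃ N ∈ S, n ≤ N}.Finite := by
    have : {n : I → ℕ | ∃ N ∈ S, n ≤ N} ⊆ ⋃ N ∈ hsol.toFinset, Set.Iic N := by
      rintro n ⟨N, hN, hle⟩
      simp only [Set.mem_iUnion, Set.Finite.mem_toFinset]
      exact ⟨N, hN, hle⟩
    refine Set.Finite.subset ?_ this
    apply Set.Finite.biUnion (Set.finite_mem_finset _)
    intro N _
    exact Set.finite_Iic N
  have himg : {y : Y | (∃ n : I → ℕ, y = ∑ i, n i • cr i) ∧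
      (∃ n : I → ℕ, c - y = ∑ i, n i • cr i)} ⊆
      (fun n : I → ℕ => ∑ i, n i • cr i) '' {n : I → ℕ | ∃ N ∈ S, n ≤ N} := by
    rintro y ⟨⟨n, hn⟩, ⟨n', hn'⟩⟩
    refine ⟨n, ⟨n + n', ?_, fun i => le_self_add⟩, hn.symm⟩
    have hc : c = ∑ i, (n i + n' i) • cr i := by
      have h3 : ∑ i, (n i + n' i) • cr i = y + (c - y) := by
        rw [hn', hn, ← Finset.sum_add_distrib]
        refine Finset.sum_congr rfl fun i _ => add_smul (M := Y) _ _ _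
      rw [h3]; abel
    show ∑ i, (n i + n' i) • ι (cr i) = ι c
    rw [hc, map_sum]
    refine Finset.sum_congr rfl fun i _ => ?_
    rw [map_nsmul]
  exact (hbdd.image _).subset himg


/-- Theorem 2.6 (abstract form): let `H` be the `R`-module of `R`-valued functions on
`Y^{++}` with almost finite support, with multiplication determined by structure
constants `m λ μ ν ∈ ℤ_{≥0}` satisfying `m λ μ ν ≠ 0 → ν ≤_{Q^∨} λ + μ` and
`m λ 0 ν = m 0 λ ν = δ_{λν}`.  Then the multiplication
`(f*g)(ν) = Σ_{λ,μ} f(λ) g(μ) m λ μ ν` is everywhere defined (the sums are finite),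
`H` is closed under it, and `c_0` (the indicator of `0`) is a two-sided unit. -/
theorem stmt15 {V : Type*} [AddCommGroup V] [Module ℝ V]
    {Y : Type*} [AddCommGroup Y] (ι : Y →+ V)
    {I : Type*} [Fintype I] (cr : I → Y)
    (hfree : ∀ a : I → ℝ, (∀ i, 0 ≤ a i) → ∑ i, a i • ι (cr i) = 0 → ∀ i, a i = 0)
    (R : Type*) [CommRing R]
    (Ypp : Set Y) (h0 : (0 : Y) ∈ Ypp)
    (m : Y → Y → Y → ℕ)
    (hmle : ∀ lam mu ν, m lam mu ν ≠ 0 → ∃ q : I → ℕ, lam + mu = ν + ∑ i, q i • cr i)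
    (hmY : ∀ lam mu ν, m lam mu ν ≠ 0 → ν ∈ Ypp)
    (hunitr : ∀ lam ν, m lam 0 ν = if ν = lam then 1 else 0)
    (hunitl : ∀ lam ν, m 0 lam ν = if ν = lam then 1 else 0) :
    let Qp : Set Y := {q | ∃ n : I → ℕ, q = ∑ i, n i • cr i}
    let AF : (Y → R) → Prop := fun f => (∀ y, f y ≠ 0 → y ∈ Ypp) ∧
      ∃ s : Finset Y, ∀ y, f y ≠ 0 → ∃ lam ∈ s, ∃ q ∈ Qp, y = lam - q
    let mul : (Y → R) → (Y → R) → (Y → R) :=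
      fun f g ν => ∑ᶠ p : Y × Y, f p.1 * g p.2 * (m p.1 p.2 ν : R)
    let c0 : Y → R := fun y => if y = 0 then 1 else 0
    (∀ f g : Y → R, AF f → AF g → ∀ ν : Y,
        {p : Y × Y | f p.1 * g p.2 * (m p.1 p.2 ν : R) ≠ 0}.Finite) ∧
    (∀ f g : Y → R, AF f → AF g → AF (mul f g)) ∧
    AF c0 ∧
    (∀ f : Y → R, AF f → mul f c0 = f ∧ mul c0 f = f) := by
  intro Qp AF mul c0
  have h0Q : (0 : Y) ∈ Qp := ⟨fun _ => 0, by simp⟩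
  have hQadd : ∀ p q : Y, p ∈ Qp → q ∈ Qp → p + q ∈ Qp := by
    rintro p q ⟨n, hn⟩ ⟨n', hn'⟩
    refine ⟨n + n', ?_⟩
    rw [hn, hn', ← Finset.sum_add_distrib]
    refine Finset.sum_congr rfl fun i _ => ?_
    rw [Pi.add_apply, add_smul]
  -- Part 1
  have part1 : ∀ f g : Y → R, AF f → AF g → ∀ ν : Y,
      {p : Y × Y | f p.1 * g p.2 * (m p.1 p.2 ν : R) ≠ 0}.Finite := by
    rintro f g ⟨hfY, s, hs⟩ ⟨hgY, t, ht⟩ ν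
    have hK : ∀ c : Y, {y : Y | y ∈ Qp ∧ c - y ∈ Qp}.Finite := fun c =>
      aux_interval_finite ι cr hfree c
    have hsub : {p : Y × Y | f p.1 * g p.2 * (m p.1 p.2 ν : R) ≠ 0} ⊆
        ⋃ a ∈ (s : Set Y), ⋃ b ∈ (t : Set Y),
          (fun pq : Y × Y => (a - pq.1, b - pq.2)) ''
            ({y : Y | y ∈ Qp ∧ (a + b - ν) - y ∈ Qp} ×ˢ
             {y : Y | y ∈ Qp ∧ (a + b - ν) - y ∈ Qp}) := by
      rintro ⟨lam, mu⟩ hterm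
      simp only [Set.mem_setOf_eq] at hterm
      have hf : f lam ≠ 0 := fun h => hterm (by simp [h])
      have hg : g mu ≠ 0 := fun h => hterm (by simp [h])
      have hm : m lam mu ν ≠ 0 := fun h => hterm (by simp [h])
      obtain ⟨a, ha, p, hp, hlam⟩ := hs lam hf
      obtain ⟨b, hb, q, hq, hmu⟩ := ht mu hg
      obtain ⟨r, hr⟩ := hmle lam mu ν hm
      have hrQ : (∑ i, r i • cr i) ∈ Qp := ⟨r, rfl⟩
      have hpK : p ∈ {y : Y | y ∈ Qp ∧ (a + b - ν) - y ∈ Qp} := by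
        refine ⟨hp, ?_⟩
        have : a + b - ν - p = q + ∑ i, r i • cr i := by
          have := hr
          rw [hlam, hmu] at this
          -- a - p + (b - q) = ν + Σ r
          have h2 : a + b = ν + (∑ i, r i • cr i) + p + q := by
            rw [← sub_eq_zero] at this ⊢; rw [← sub_eq_zero]; abel_nf
            abel_nf at this
            linear_combination (norm := abel) this
          rw [h2]; abel
        rw [this]; exact hQadd _ _ hq hrQ
      have hqK : q ∈ {y : Y | y ∈ Qp ∧ (a + b - ν) - y ∈ Qp} := by
        refine ⟨hq, ?_⟩
        have := hr
        rw [hlam, hmu] at this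
        have h2 : a + b - ν - q = p + ∑ i, r i • cr i := by
          linear_combination (norm := abel) this
        rw [h2]; exact hQadd _ _ hp hrQ
      simp only [Set.mem_iUnion]
      exact ⟨a, ha, b, hb, ⟨(p, q), ⟨hpK, hqK⟩, by simp [hlam, hmu]⟩⟩
    refine Set.Finite.subset ?_ hsub
    refine Set.Finite.biUnion s.finite_toSet fun a _ => ?_
    refine Set.Finite.biUnion t.finite_toSet fun b _ => ?_
    exact ((hK _).prod (hK _)).image _
  refine ⟨part1, ?_, ?_, ?_⟩
  · -- Part 2: closure
    rintro f g hf hg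
    obtain ⟨hfY, s, hs⟩ := hf
    obtain ⟨hgY, t, ht⟩ := hg
    have key : ∀ ν : Y, mul f g ν ≠ 0 → ∃ lam mu : Y,
        f lam ≠ 0 ∧ g mu ≠ 0 ∧ m lam mu ν ≠ 0 := by
      intro ν hν
      by_contra hc
      push_neg at hc
      apply hν
      apply finsum_eq_zero_of_forall_eq_zero
      rintro ⟨lam, mu⟩
      by_contra hterm
      have hf' : f lam ≠ 0 := fun h => hterm (by simp [h])
      have hg' : g mu ≠ 0 := fun h => hterm (by simp [h])
      have hm' : m lam mu ν ≠ 0 := fun h => hterm (by simp [h])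
      exact hm' (hc lam mu hf' hg')
    constructor
    · intro ν hν
      obtain ⟨lam, mu, _, _, hm'⟩ := key ν hν
      exact hmY lam mu ν hm'
    · refine ⟨Finset.image (fun ab : Y × Y => ab.1 + ab.2) (s ×ˢ t), ?_⟩
      intro ν hν
      obtain ⟨lam, mu, hf', hg', hm'⟩ := key ν hν
      obtain ⟨a, ha, p, hp, hlam⟩ := hs lam hf'
      obtain ⟨b, hb, q, hq, hmu⟩ := ht mu hg'
      obtain ⟨r, hr⟩ := hmle lam mu ν hm'
      refine ⟨a + b, Finset.mem_image.2 ⟨(a, b), Finset.mem_product.2 ⟨ha, hb⟩, rfl⟩, p + q + ∑ i, r i • cr i,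
        hQadd _ _ (hQadd _ _ hp hq) ⟨r, rfl⟩, ?_⟩
      rw [hlam, hmu] at hr
      linear_combination (norm := abel) -hr
  · -- Part 3: AF c0
    constructor
    · intro y hy
      have : y = 0 := by by_contra h; simp [c0, h] at hy
      rw [this]; exact h0
    · refine ⟨{0}, fun y hy => ?_⟩
      have : y = 0 := by by_contra h; simp [c0, h] at hy
      exact ⟨0, Finset.mem_singleton_self 0, 0, h0Q, by rw [this]; abel⟩
  · -- Part 4: unit
    intro f hf
    constructor
    · funext ν
      show (∑ᶠ p : Y × Y, f p.1 * c0 p.2 * (m p.1 p.2 ν : R)) = f ν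
      rw [finsum_eq_single _ ((ν, 0) : Y × Y)]
      · simp [c0, hunitr]
      · rintro ⟨lam, mu⟩ hne
        by_cases hmu : mu = 0
        · subst hmu
          have hlam : lam ≠ ν := fun h => hne (by rw [h])
          rw [hunitr lam ν, if_neg (fun h => hlam h.symm)]
          simp
        · simp [c0, hmu]
    · funext ν
      show (∑ᶠ p : Y × Y, c0 p.1 * f p.2 * (m p.1 p.2 ν : R)) = f ν
      rw [finsum_eq_single _ ((0, ν) : Y × Y)]
      · simp [c0, hunitl]
      · rintro ⟨lam, mu⟩ hne
        by_cases hlam : lam = 0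
        · subst hlam
          have hmu : mu ≠ ν := fun h => hne (by rw [h])
          rw [hunitl mu ν, if_neg (fun h => hmu h.symm)]
          simp
        · simp [c0, hlam]
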